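/- Let N ≥ 4, δ = (N-2)/2, p = N/(N-2), and let u, v be positive radially symmetric C² functions on ℝᴺ\{0} solving -Δu = μ₁u^{2p-1} + βu^{p-1}v^p, -Δv = μ₂v^{2p-1} + βv^{p-1}u^p with μ₁, μ₂, β > 0. Suppose there exist constants C₁, C₂ > 0 such that u(r) ≥ C₁r^{-δ} and v(r) ≥ C₂ for all r ∈ (0,1]. If moreover r^{N-1}v'(r) → 0 as r → 0, then -v'(r) ≥ C·r^{1-N/2} for some constant C > 0 and all r ∈ (0,1], and consequently v(r) → +∞ as r → 0. -/

import Mathlib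

open Filter

theorem stmt_15 (N : ℕ) (hN : 4 ≤ N) (δ p μ₁ μ₂ β C₁ C₂ : ℝ)
    (hδ : δ = ((N : ℝ) - 2) / 2) (hp : p = (N : ℝ) / ((N : ℝ) - 2))
    (hμ₁ : 0 < μ₁) (hμ₂ : 0 < μ₂) (hβ : 0 < β)
    (u v : ℝ → ℝ)
    (hu : ContDiffOn ℝ 2 u (Set.Ioi 0)) (hv : ContDiffOn ℝ 2 v (Set.Ioi 0))
    (hupos : ∀ r > (0:ℝ), 0 < u r) (hvpos : ∀ r > (0:ℝ), 0 < v r)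
    (hequ : ∀ r > (0:ℝ), -(deriv (deriv u) r + (((N : ℝ) - 1) / r) * deriv u r)
      = μ₁ * u r ^ (2*p - 1) + β * u r ^ (p - 1) * v r ^ p)
    (heqv : ∀ r > (0:ℝ), -(deriv (deriv v) r + (((N : ℝ) - 1) / r) * deriv v r)
      = μ₂ * v r ^ (2*p - 1) + β * v r ^ (p - 1) * u r ^ p)
    (hC₁ : 0 < C₁) (hC₂ : 0 < C₂)
    (hub : ∀ r ∈ Set.Ioc (0:ℝ) 1, C₁ * r ^ (-δ) ≤ u r)
    (hvb : ∀ r ∈ Set.Ioc (0:ℝ) 1, C₂ ≤ v r)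
    (hflux : Tendsto (fun r => r ^ ((N : ℝ) - 1) * deriv v r) (nhdsWithin 0 (Set.Ioi 0))
      (nhds 0)) :
    (∃ C > (0:ℝ), ∀ r ∈ Set.Ioc (0:ℝ) 1, C * r ^ (1 - (N : ℝ)/2) ≤ -deriv v r) ∧
    Tendsto v (nhdsWithin 0 (Set.Ioi 0)) atTop := by
  have hN4 : (4:ℝ) ≤ (N:ℝ) := by exact_mod_cast hN
  set Nr : ℝ := (N:ℝ) with hNr
  have hNr0 : (0:ℝ) < Nr := by linarith
  have hN2 : (0:ℝ) < Nr - 2 := by linarith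
  have hppos : 0 < p := by rw [hp]; positivity
  have hp1 : 0 ≤ p - 1 := by
    rw [hp]; rw [le_sub_iff_add_le, zero_add, le_div_iff₀ hN2]; linarith
  have hδp : δ * p = Nr / 2 := by
    rw [hδ, hp]; field_simp
  -- constants
  set K : ℝ := β * C₂ ^ (p - 1) * C₁ ^ p with hK
  have hKpos : 0 < K := by
    apply mul_pos (mul_pos hβ _) (Real.rpow_pos_of_pos hC₁ _)
    exact Real.rpow_pos_of_pos hC₂ _
  set C : ℝ := 2 * K / Nr with hCdef
  have hCpos : 0 < C := by positivity
  -- differentiability facts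
  have hdv : ∀ r : ℝ, 0 < r → DifferentiableAt ℝ v r := fun r hr =>
    (hv.differentiableOn (by norm_num)).differentiableAt (isOpen_Ioi.mem_nhds hr)
  have hdv' : ∀ r : ℝ, 0 < r → DifferentiableAt ℝ (deriv v) r := by
    intro r hr
    have h1 : ContDiffOn ℝ 1 (deriv v) (Set.Ioi 0) :=
      hv.deriv_of_isOpen isOpen_Ioi (by norm_num)
    exact (h1.differentiableOn (by norm_num)).differentiableAt (isOpen_Ioi.mem_nhds hr)
  -- g and its derivative
  set g : ℝ → ℝ := fun r => r ^ (Nr - 1) * deriv v r + C * r ^ (Nr / 2) with hgdef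
  have hg : ∀ r : ℝ, 0 < r → HasDerivAt g
      ((Nr - 1) * r ^ (Nr - 1 - 1) * deriv v r + r ^ (Nr - 1) * deriv (deriv v) r
        + C * (Nr / 2 * r ^ (Nr / 2 - 1))) r := by
    intro r hr
    have h1 : HasDerivAt (fun x : ℝ => x ^ (Nr - 1)) ((Nr - 1) * r ^ (Nr - 1 - 1)) r :=
      Real.hasDerivAt_rpow_const (Or.inl hr.ne')
    have h2 : HasDerivAt (deriv v) (deriv (deriv v) r) r := (hdv' r hr).hasDerivAt
    have h3 : HasDerivAt (fun x : ℝ => x ^ (Nr / 2)) (Nr / 2 * r ^ (Nr / 2 - 1)) r :=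
      Real.hasDerivAt_rpow_const (Or.inl hr.ne')
    exact (h1.mul h2).add (h3.const_mul C)
  have hdg : ∀ r : ℝ, 0 < r → DifferentiableAt ℝ g r := fun r hr =>
    (hg r hr).differentiableAt
  -- key pointwise inequality on (0,1]
  have hge : ∀ r ∈ Set.Ioc (0:ℝ) 1, deriv g r ≤ 0 := by
    rintro r ⟨hr, hr1⟩
    rw [(hg r hr).deriv]
    have hrearr : (Nr - 1) * r ^ (Nr - 1 - 1) * deriv v r + r ^ (Nr - 1) * deriv (deriv v) r
        = r ^ (Nr - 1) * (deriv (deriv v) r + ((Nr - 1) / r) * deriv v r) := by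
      have : r ^ (Nr - 1 - 1) = r ^ (Nr - 1) / r := Real.rpow_sub_one hr.ne' _
      rw [this]; field_simp; ring
    have heq := heqv r hr
    have hRHS : K * r ^ (-(Nr / 2))
        ≤ μ₂ * v r ^ (2 * p - 1) + β * v r ^ (p - 1) * u r ^ p := by
      have h0 : 0 ≤ μ₂ * v r ^ (2 * p - 1) :=
        le_of_lt (mul_pos hμ₂ (Real.rpow_pos_of_pos (hvpos r hr) _))
      have hu1 : (C₁ * r ^ (-δ)) ^ p ≤ u r ^ p :=
        Real.rpow_le_rpow (by positivity) (hub r ⟨hr, hr1⟩) hppos.le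
      have hv1 : C₂ ^ (p - 1) ≤ v r ^ (p - 1) :=
        Real.rpow_le_rpow hC₂.le (hvb r ⟨hr, hr1⟩) hp1
      have hval : (C₁ * r ^ (-δ)) ^ p = C₁ ^ p * r ^ (-(Nr / 2)) := by
        rw [Real.mul_rpow hC₁.le (Real.rpow_nonneg hr.le _),
          ← Real.rpow_mul hr.le]
        congr 2
        rw [← hδp]; ring
      have : K * r ^ (-(Nr / 2)) ≤ β * v r ^ (p - 1) * u r ^ p := by
        calc K * r ^ (-(Nr / 2)) = β * C₂ ^ (p - 1) * (C₁ ^ p * r ^ (-(Nr / 2))) := by ring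
          _ ≤ β * v r ^ (p - 1) * (C₁ ^ p * r ^ (-(Nr / 2))) := by
              apply mul_le_mul_of_nonneg_right _ (by positivity)
              exact mul_le_mul_of_nonneg_left hv1 hβ.le
          _ ≤ β * v r ^ (p - 1) * u r ^ p := by
              apply mul_le_mul_of_nonneg_left _
                (mul_pos hβ (Real.rpow_pos_of_pos (hvpos r hr) _)).le
              rw [← hval]; exact hu1
      linarith
    have hpow : r ^ (Nr - 1) * r ^ (-(Nr / 2)) = r ^ (Nr / 2 - 1) := by
      rw [← Real.rpow_add hr]; congr 1; ring
    have hrp : (0:ℝ) < r ^ (Nr - 1) := Real.rpow_pos_of_pos hr _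
    have hCK : C * (Nr / 2 * r ^ (Nr / 2 - 1)) = K * r ^ (Nr / 2 - 1) := by
      rw [hCdef]; field_simp
    rw [hrearr]
    have h5 : deriv (deriv v) r + ((Nr - 1) / r) * deriv v r
        = -(μ₂ * v r ^ (2 * p - 1) + β * v r ^ (p - 1) * u r ^ p) := by linarith
    rw [h5, hCK]
    have h6 : K * r ^ (-(Nr / 2)) * r ^ (Nr - 1)
        ≤ (μ₂ * v r ^ (2 * p - 1) + β * v r ^ (p - 1) * u r ^ p) * r ^ (Nr - 1) :=
      mul_le_mul_of_nonneg_right hRHS hrp.le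
    have h7 : K * r ^ (-(Nr / 2)) * r ^ (Nr - 1) = K * r ^ (Nr / 2 - 1) := by
      rw [mul_assoc, mul_comm (r ^ (-(Nr / 2))), hpow]
    nlinarith
  -- limit of g at 0+
  have hg0 : Tendsto g (nhdsWithin 0 (Set.Ioi 0)) (nhds 0) := by
    have h1 : Tendsto (fun r : ℝ => r ^ (Nr / 2)) (nhdsWithin 0 (Set.Ioi 0)) (nhds 0) := by
      have hc : ContinuousAt (fun r : ℝ => r ^ (Nr / 2)) 0 :=
        Real.continuousAt_rpow_const 0 (Nr / 2) (Or.inr (by positivity))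
      have : Tendsto (fun r : ℝ => r ^ (Nr / 2)) (nhdsWithin 0 (Set.Ioi 0))
          (nhds ((0:ℝ) ^ (Nr / 2))) :=
        hc.tendsto.mono_left nhdsWithin_le_nhds
      rwa [Real.zero_rpow (by positivity : Nr / 2 ≠ 0)] at this
    have := hflux.add ((h1.const_mul C))
    simpa using this
  -- g ≤ 0 on (0,1]
  have hgle : ∀ r ∈ Set.Ioc (0:ℝ) 1, g r ≤ 0 := by
    rintro r ⟨hr, hr1⟩
    have key : ∀ s ∈ Set.Ioo (0:ℝ) r, g r ≤ g s := by
      rintro s ⟨hs, hsr⟩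
      have hsub : Set.Icc s r ⊆ Set.Ioi 0 := fun x hx => lt_of_lt_of_le hs hx.1
      have hanti : AntitoneOn g (Set.Icc s r) := by
        apply antitoneOn_of_deriv_nonpos (convex_Icc s r)
        · exact fun x hx => ((hdg x (hsub hx)).continuousAt).continuousWithinAt
        · intro x hx
          rw [interior_Icc] at hx
          exact (hdg x (lt_trans hs hx.1)).differentiableWithinAt
        · intro x hx
          rw [interior_Icc] at hx
          exact hge x ⟨lt_trans hs hx.1, le_trans hx.2.le hr1⟩
      exact hanti ⟨le_refl s, hsr.le⟩ ⟨hsr.le, le_refl r⟩ hsr.le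
    have hev : ∀ᶠ s in nhdsWithin 0 (Set.Ioi 0), g r ≤ g s := by
      filter_upwards [Ioo_mem_nhdsGT_of_mem (Set.left_mem_Ico.mpr hr)] with s hs
      exact key s hs
    exact ge_of_tendsto hg0 hev
  -- the pointwise derivative bound
  have hmain : ∀ r ∈ Set.Ioc (0:ℝ) 1, C * r ^ (1 - Nr / 2) ≤ -deriv v r := by
    rintro r ⟨hr, hr1⟩
    have h1 := hgle r ⟨hr, hr1⟩
    have hrp : (0:ℝ) < r ^ (Nr - 1) := Real.rpow_pos_of_pos hr _
    have h2 : C * r ^ (Nr / 2) ≤ -deriv v r * r ^ (Nr - 1) := by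
      simp only [hgdef] at h1; nlinarith
    have h3 : r ^ (1 - Nr / 2) * r ^ (Nr - 1) = r ^ (Nr / 2) := by
      rw [← Real.rpow_add hr]; congr 1; ring
    have h4 : C * r ^ (1 - Nr / 2) * r ^ (Nr - 1) ≤ -deriv v r * r ^ (Nr - 1) := by
      rw [mul_assoc, h3]; exact h2
    exact le_of_mul_le_mul_right h4 hrp
  refine ⟨⟨C, hCpos, hmain⟩, ?_⟩
  -- divergence of v
  have hvlb : ∀ r ∈ Set.Ioc (0:ℝ) 1, v 1 - C * Real.log r ≤ v r := by
    rintro r ⟨hr, hr1⟩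
    set h : ℝ → ℝ := fun x => v x + C * Real.log x with hhdef
    have hdh : ∀ x : ℝ, 0 < x → HasDerivAt h (deriv v x + C * x⁻¹) x := by
      intro x hx
      exact (hdv x hx).hasDerivAt.add ((Real.hasDerivAt_log hx.ne').const_mul C)
    have hderh : ∀ x ∈ Set.Ioc (0:ℝ) 1, deriv h x ≤ 0 := by
      rintro x ⟨hx, hx1⟩
      rw [(hdh x hx).deriv]
      have h1 := hmain x ⟨hx, hx1⟩
      have h2 : x ^ (-1 : ℝ) ≤ x ^ (1 - Nr / 2) :=
        Real.rpow_le_rpow_of_exponent_ge hx hx1 (by linarith)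
      rw [Real.rpow_neg_one] at h2
      have h3 : C * x⁻¹ ≤ C * x ^ (1 - Nr / 2) :=
        mul_le_mul_of_nonneg_left h2 hCpos.le
      linarith
    have hanti : AntitoneOn h (Set.Icc r 1) := by
      apply antitoneOn_of_deriv_nonpos (convex_Icc r 1)
      · intro x hx
        exact ((hdh x (lt_of_lt_of_le hr hx.1)).differentiableAt.continuousAt).continuousWithinAt
      · intro x hx
        rw [interior_Icc] at hx
        exact (hdh x (lt_trans hr hx.1)).differentiableAt.differentiableWithinAt
      · intro x hx
        rw [interior_Icc] at hx
        exact hderh x ⟨lt_trans hr hx.1, hx.2.le⟩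
    have := hanti ⟨le_refl r, hr1⟩ ⟨hr1, le_refl 1⟩ hr1
    simp only [hhdef, Real.log_one, mul_zero, add_zero] at this
    linarith
  have hlow : Tendsto (fun r : ℝ => v 1 - C * Real.log r) (nhdsWithin 0 (Set.Ioi 0)) atTop := by
    have h1 : Tendsto (fun r : ℝ => C * Real.log r) (nhdsWithin 0 (Set.Ioi 0)) atBot :=
      Real.tendsto_log_nhdsGT_zero.const_mul_atBot hCpos
    have h2 : Tendsto (fun r : ℝ => -(C * Real.log r)) (nhdsWithin 0 (Set.Ioi 0)) atTop :=
      tendsto_neg_atBot_atTop.comp h1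
    have := tendsto_atTop_add_const_left _ (v 1) h2
    simpa [sub_eq_add_neg] using this
  apply tendsto_atTop_mono' _ _ hlow
  filter_upwards [Ioc_mem_nhdsGT zero_lt_one] with r hr
  exact hvlb r hr
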